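/- Let 𝒜 = {a,b,c,d} and let ω^G be the Grigorchuk substitution sequence. Then ω^G is a Toeplitz sequence, and the set EP(ω^G) of its essential partial periods is exactly {2^k : k ≥ 1}. -/
import Mathlib


/-- The four-letter alphabet 𝒜 = {a,b,c,d}. -/
inductive A : Type
  | a | b | c | d
  deriving DecidableEq

/-- A sequence (0-indexed: index `n` stands for position `n+1`) is Toeplitz if every
position is periodically repeated: for every `n` there is `p ≥ 1` with
`x(n+kp) = x(n)` for all `k ≥ 1`. -/
def IsToeplitz {𝒜 : Type*} (x : ℕ → 𝒜) : Prop :=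
  ∀ n : ℕ, ∃ p : ℕ, 0 < p ∧ ∀ k : ℕ, 0 < k → x (n + k * p) = x n

/-- `p ≥ 1` is an essential partial period of `x` if there is a position `m` with
`x(m+kp) = x(m)` for all `k ≥ 1`, while for every `1 ≤ p' < p` some `k ≥ 1` has
`x(m+kp') ≠ x(m)`. -/
def EP {𝒜 : Type*} (x : ℕ → 𝒜) : Set ℕ :=
  {p | 0 < p ∧ ∃ m : ℕ, (∀ k : ℕ, 0 < k → x (m + k * p) = x m) ∧
    ∀ p' : ℕ, 0 < p' → p' < p → ∃ k : ℕ, 0 < k ∧ x (m + k * p') ≠ x m}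

/-- The Grigorchuk substitution sequence `ω^G` (0-indexed: `omegaG n` is the letter at
position `m = n+1`).  Writing `m = 2^k(2l+1)`: the letter is `a` if `k = 0`, and for
`k ≥ 1` it is `d`, `c`, or `b` according as `k ≡ 0, 1, 2 (mod 3)`. -/
def omegaG : ℕ → A := fun n =>
  if padicValNat 2 (n + 1) = 0 then A.a
  else if padicValNat 2 (n + 1) % 3 = 0 then A.d
  else if padicValNat 2 (n + 1) % 3 = 1 then A.c
  else A.b

/-- `ω^G` is a Toeplitz sequence whose set of essential partial periods is exactly
`{2^k : k ≥ 1}`. -/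
def letterF : ℕ → A := fun v =>
  if v = 0 then A.a else if v % 3 = 0 then A.d else if v % 3 = 1 then A.c else A.b

lemma omegaG_eq (n : ℕ) : omegaG n = letterF (padicValNat 2 (n + 1)) := rfl

lemma val2_mul_pow (v u : ℕ) (hu : Odd u) : padicValNat 2 (2 ^ v * u) = v := by
  have hu0 : u ≠ 0 := by rintro rfl; simp [Nat.odd_iff] at hu
  rw [padicValNat.mul (by positivity) hu0, padicValNat.prime_pow,
    padicValNat.eq_zero_of_not_dvd (by rwa [Nat.two_dvd_ne_zero, ← Nat.odd_iff])]
  omega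

lemma exists_odd_decomp (n : ℕ) (hn : n ≠ 0) :
    ∃ u, Odd u ∧ n = 2 ^ padicValNat 2 n * u := by
  obtain ⟨u, hu⟩ := (pow_padicValNat_dvd (p := 2) (n := n))
  refine ⟨u, ?_, hu⟩
  rcases Nat.even_or_odd u with he | ho
  · exfalso
    obtain ⟨w, rfl⟩ := he
    refine pow_succ_padicValNat_not_dvd (p := 2) hn ⟨w, ?_⟩
    nth_rewrite 1 [hu]
    rw [pow_succ]; ring
  · exact ho

lemma letterF_ne {a b : ℕ} (ha : 0 < a) (hb : 0 < b) (h : a % 3 ≠ b % 3) :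
    letterF a ≠ letterF b := by
  have h3a : a % 3 = 0 ∨ a % 3 = 1 ∨ a % 3 = 2 := by omega
  have h3b : b % 3 = 0 ∨ b % 3 = 1 ∨ b % 3 = 2 := by omega
  rcases h3a with h1 | h1 | h1 <;> rcases h3b with h2 | h2 | h2 <;>
    simp_all [letterF, ha.ne', hb.ne']

lemma letterF_a_ne {b : ℕ} (hb : 0 < b) : letterF 0 ≠ letterF b := by
  have h3b : b % 3 = 0 ∨ b % 3 = 1 ∨ b % 3 = 2 := by omega
  rcases h3b with h2 | h2 | h2 <;> simp_all [letterF, hb.ne']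

/-- Key lemma: if `v₂(p') ≤ v₂(M)`, `M, p' > 0`, then some translate `M + j*p'`
has a different letter. -/
lemma key (M p' : ℕ) (hM : 0 < M) (hp : 0 < p')
    (hs : padicValNat 2 p' ≤ padicValNat 2 M) :
    ∃ j : ℕ, 0 < j ∧
      letterF (padicValNat 2 (M + j * p')) ≠ letterF (padicValNat 2 M) := by
  set v := padicValNat 2 M with hv
  set s := padicValNat 2 p' with hsdef
  obtain ⟨q, hq, hpq⟩ := exists_odd_decomp p' hp.ne'
  obtain ⟨u, hu, hMu⟩ := exists_odd_decomp M hM.ne'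
  -- choose target w > s with letterF w ≠ letterF v
  obtain ⟨w, hws, hwne⟩ : ∃ w, s < w ∧ letterF w ≠ letterF v := by
    rcases Nat.eq_zero_or_pos v with hv0 | hv0
    · exact ⟨s + 1, by omega, by rw [hv0]; exact (letterF_a_ne (by omega)).symm⟩
    · by_cases hc : (s + 1) % 3 = v % 3
      · exact ⟨s + 2, by omega, letterF_ne (by omega) hv0 (by omega)⟩
      · exact ⟨s + 1, by omega, letterF_ne (by omega) hv0 hc⟩
  set t := w - s with ht
  have htpos : 0 < t := by omega
  set N := 2 ^ (t + 1) with hN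
  have hNpos : 0 < N := by positivity
  obtain ⟨M₁, hM1⟩ : ∃ x : ℕ, x = 2 ^ (v - s) * u := ⟨_, rfl⟩
  have hMM1 : M = 2 ^ s * M₁ := by
    rw [hM1, hMu, ← mul_assoc, ← pow_add]
    congr 2; omega
  -- q is coprime to N
  have hqcop : Nat.Coprime q N := by
    apply Nat.Coprime.pow_right
    exact ((Nat.prime_two.coprime_iff_not_dvd).mpr
      (by rwa [Nat.two_dvd_ne_zero, ← Nat.odd_iff])).symm
  -- solve the congruence in ZMod N
  set jz : ZMod N := (q : ZMod N)⁻¹ * ((2 ^ t : ℕ) - (M₁ : ℕ)) with hjz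
  obtain ⟨j, hj⟩ : ∃ j : ℕ, j = jz.val + N := ⟨_, rfl⟩
  have hjpos : 0 < j := by omega
  have hcong : ((M₁ + j * q : ℕ) : ZMod N) = ((2 ^ t : ℕ) : ZMod N) := by
    have hinv : (q : ZMod N) * (q : ZMod N)⁻¹ = 1 := ZMod.coe_mul_inv_eq_one q hqcop
    have hjcast : ((j : ℕ) : ZMod N) = jz := by
      rw [hj, Nat.cast_add, ZMod.natCast_self, add_zero, ZMod.natCast_val, ZMod.cast_id]
    rw [Nat.cast_add, Nat.cast_mul, hjcast, hjz]
    calc ((M₁ : ℕ) : ZMod N) + (q : ZMod N)⁻¹ * (((2^t : ℕ) : ZMod N) - ((M₁:ℕ) : ZMod N)) * (q : ZMod N)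
        = ((M₁:ℕ) : ZMod N) + (((2^t : ℕ):ZMod N) - ((M₁:ℕ):ZMod N)) * ((q : ZMod N) * (q : ZMod N)⁻¹) := by ring
      _ = ((2^t : ℕ) : ZMod N) := by rw [hinv]; ring
  have hmod : (M₁ + j * q) % N = 2 ^ t := by
    have h1 := (ZMod.natCast_eq_natCast_iff _ _ _).mp hcong
    have h2 : (2 ^ t) % N = 2 ^ t := Nat.mod_eq_of_lt (by
      rw [hN]; exact Nat.pow_lt_pow_right one_lt_two (by omega))
    unfold Nat.ModEq at h1
    rw [h1, h2]
  -- hence M₁ + j*q = 2^t * odd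
  have hx : M₁ + j * q = 2 ^ t * (2 * ((M₁ + j * q) / N) + 1) := by
    have h2N : N = 2 ^ t * 2 := by rw [hN, pow_succ]
    calc M₁ + j * q = N * ((M₁ + j * q) / N) + (M₁ + j * q) % N :=
          (Nat.div_add_mod _ _).symm
      _ = N * ((M₁ + j * q) / N) + 2 ^ t := by rw [hmod]
      _ = 2 ^ t * (2 * ((M₁ + j * q) / N) + 1) := by rw [h2N]; ring
  have hval : padicValNat 2 (M + j * p') = w := by
    have : M + j * p' = 2 ^ (s + t) * (2 * ((M₁ + j * q) / N) + 1) := by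
      rw [hMM1, hpq, pow_add]
      calc 2 ^ s * M₁ + j * (2 ^ s * q) = 2 ^ s * (M₁ + j * q) := by ring
        _ = 2 ^ s * (2 ^ t * (2 * ((M₁ + j * q) / N) + 1)) := by rw [← hx]
        _ = 2 ^ s * 2 ^ t * (2 * ((M₁ + j * q) / N) + 1) := by ring
    rw [this, val2_mul_pow _ _ ⟨_, rfl⟩]
    omega
  exact ⟨j, hjpos, by rw [hval]; exact hwne⟩

lemma omegaG_shift (m k p : ℕ) :
    omegaG (m + k * p) = letterF (padicValNat 2 ((m + 1) + k * p)) := by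
  rw [omegaG_eq]; congr 2; omega

lemma val2_stable {M v u : ℕ} (hu : Odd u) (hMu : M = 2 ^ v * u) (k : ℕ) :
    padicValNat 2 (M + k * 2 ^ (v + 1)) = v := by
  have h : M + k * 2 ^ (v + 1) = 2 ^ v * (u + 2 * k) := by rw [hMu, pow_succ]; ring
  rw [h, val2_mul_pow _ _ (by rcases hu with ⟨r, hr⟩; exact ⟨r + k, by omega⟩)]

theorem stmt4 :
    IsToeplitz omegaG ∧ EP omegaG = {p : ℕ | ∃ k : ℕ, 1 ≤ k ∧ p = 2 ^ k} := by
  constructor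
  · -- Toeplitz
    intro n
    obtain ⟨u, hu, hMu⟩ := exists_odd_decomp (n + 1) (by omega)
    set v := padicValNat 2 (n + 1) with hv
    refine ⟨2 ^ (v + 1), by positivity, fun k _ => ?_⟩
    rw [omegaG_shift, omegaG_eq, val2_stable hu hMu]
  · ext p
    simp only [Set.mem_setOf_eq]
    constructor
    · rintro ⟨hp0, m, h1, h2⟩
      set M := m + 1 with hM
      set v := padicValNat 2 M with hv
      set s := padicValNat 2 p with hs
      by_cases hsv : s ≤ v
      · exfalso
        obtain ⟨j, hjpos, hne⟩ := key M p (by omega) hp0 hsv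
        exact hne (by rw [← omegaG_shift, ← hv, ← omegaG_eq]; exact h1 j hjpos)
      · obtain ⟨u, hu, hMu⟩ := exists_odd_decomp M (by omega)
        obtain ⟨q, hq, hpq⟩ := exists_odd_decomp p hp0.ne'
        have hq1 : 1 ≤ q := hq.pos
        have hple : p ≤ 2 ^ (v + 1) := by
          by_contra hgt
          push_neg at hgt
          obtain ⟨k, hkpos, hne⟩ := h2 (2 ^ (v + 1)) (by positivity) hgt
          exact hne (by rw [omegaG_shift, val2_stable hu hMu, omegaG_eq])
        have hpge : 2 ^ (v + 1) ≤ p := by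
          calc 2 ^ (v + 1) ≤ 2 ^ s := Nat.pow_le_pow_right (by omega) (by omega)
            _ ≤ 2 ^ s * q := Nat.le_mul_of_pos_right _ hq1
            _ = p := hpq.symm
        exact ⟨v + 1, by omega, by omega⟩
    · rintro ⟨k, hk, rfl⟩
      obtain ⟨k', rfl⟩ : ∃ k', k = k' + 1 := ⟨k - 1, by omega⟩
      refine ⟨by positivity, 2 ^ k' - 1, ?_, ?_⟩
      · intro j hj
        have hM : 2 ^ k' - 1 + 1 = 2 ^ k' * 1 := by
          have : 1 ≤ 2 ^ k' := Nat.one_le_two_pow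
          omega
        rw [omegaG_shift, omegaG_eq, hM, val2_stable odd_one rfl, val2_mul_pow k' 1 odd_one]
      · intro p' hp'0 hp'lt
        have hM1 : 2 ^ k' - 1 + 1 = 2 ^ k' := by
          have : 1 ≤ 2 ^ k' := Nat.one_le_two_pow
          omega
        have hsle : padicValNat 2 p' ≤ padicValNat 2 (2 ^ k' - 1 + 1) := by
          rw [hM1, padicValNat.prime_pow]
          have hdvd : 2 ^ padicValNat 2 p' ≤ p' :=
            Nat.le_of_dvd hp'0 pow_padicValNat_dvd
          have h2 : 2 ^ padicValNat 2 p' < 2 ^ (k' + 1) := lt_of_le_of_lt hdvd hp'lt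
          have := (Nat.pow_lt_pow_iff_right (a := 2) one_lt_two).mp h2
          omega
        obtain ⟨j, hjpos, hne⟩ := key _ p' (by omega) hp'0 hsle
        exact ⟨j, hjpos, by rw [omegaG_shift, omegaG_eq]; exact hne⟩
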